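/- arXiv:1311.6155 — 9 statements merged into one kernel-verified Lean document; each statement's English description precedes it below -/
import Mathlib

section
/- Let R be an integral domain, p a prime ideal of R, and φ ∈ R with φ ∉ p. Then the localization R_φ (at powers of φ) equals the localization R_p (as subrings of the fraction field of R) if and only if φ belongs to every prime ideal q of R such that q is not contained in p. -/
theorem stmt_2 {R K : Type*} [CommRing R] [IsDomain R] [Field K] [Algebra R K]
    [IsFractionRing R K] (p : Ideal R) [p.IsPrime] (φ : R) (hφ : φ ∉ p) :
    {x : K | ∃ (a : R) (n : ℕ), x * algebraMap R K (φ ^ n) = algebraMap R K a} =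
      {x : K | ∃ (a b : R), b ∉ p ∧ x * algebraMap R K b = algebraMap R K a} ↔
    ∀ q : Ideal R, q.IsPrime → ¬ q ≤ p → φ ∈ q := by
  have inj := IsFractionRing.injective R K
  constructor
  · intro h q hq hqp
    obtain ⟨b, hbq, hbp⟩ := SetLike.not_le_iff_exists.mp hqp
    have hb0 : b ≠ 0 := fun h0 => hbp (h0 ▸ p.zero_mem)
    have hbK : algebraMap R K b ≠ 0 := fun h0 => hb0 (inj (by simpa using h0))
    have hx : (algebraMap R K b)⁻¹ ∈
        {x : K | ∃ (a b : R), b ∉ p ∧ x * algebraMap R K b = algebraMap R K a} :=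
      ⟨1, b, hbp, by rw [inv_mul_cancel₀ hbK, map_one]⟩
    rw [← h] at hx
    obtain ⟨a, n, hn⟩ := hx
    have key : φ ^ n = a * b := by
      apply inj
      rw [map_mul, ← hn]
      field_simp
    exact hq.mem_of_pow_mem n (key ▸ Ideal.mul_mem_left q a hbq)
  · intro h
    ext x
    constructor
    · rintro ⟨a, n, hn⟩
      exact ⟨a, φ ^ n, fun hm => hφ ((Ideal.IsPrime.mem_of_pow_mem ‹p.IsPrime› n) hm), hn⟩
    · rintro ⟨a, b, hbp, hab⟩
      have hb0 : b ≠ 0 := fun h0 => hbp (h0 ▸ p.zero_mem)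
      have hbK : algebraMap R K b ≠ 0 := fun h0 => hb0 (inj (by simpa using h0))
      set J := (Ideal.span {b}).colon (Ideal.span {a}) with hJ
      have hbJ : b ∈ J := by
        rw [hJ, Ideal.mem_colon_span_singleton]
        exact Ideal.mem_span_singleton.mpr ⟨a, rfl⟩
      have hφJ : φ ∈ J.radical := by
        rw [Ideal.radical_eq_sInf]
        refine Ideal.mem_sInf.mpr ?_
        rintro q ⟨hJq, hq⟩
        by_cases hle : q ≤ p
        · exact absurd (hle (hJq hbJ)) hbp
        · exact h q hq hle
      obtain ⟨n, hn⟩ := hφJ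
      rw [hJ, Ideal.mem_colon_span_singleton] at hn
      obtain ⟨c, hc⟩ := Ideal.mem_span_singleton.mp hn
      refine ⟨c, n, mul_right_cancel₀ hbK ?_⟩
      calc x * algebraMap R K (φ ^ n) * algebraMap R K b
          = x * algebraMap R K b * algebraMap R K (φ ^ n) := by ring
        _ = algebraMap R K a * algebraMap R K (φ ^ n) := by rw [hab]
        _ = algebraMap R K c * algebraMap R K b := by
              rw [← map_mul, ← map_mul]
              congr 1
              linear_combination hc
end

section
/- Let m be a maximal ideal of an integral domain R. If S is a local ring with R ⊆ S ⊆ R_m (as subrings of the fraction field of R), then S = R_m. -/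
theorem stmt_3 {R K : Type*} [CommRing R] [IsDomain R] [Field K] [Algebra R K]
    [IsFractionRing R K] (m : Ideal R) (hm : m.IsMaximal) (S : Subring K)
    [IsLocalRing S]
    (hRS : ∀ r : R, algebraMap R K r ∈ S)
    (hSm : (S : Set K) ⊆
      {x : K | ∃ (a b : R), b ∉ m ∧ x * algebraMap R K b = algebraMap R K a}) :
    (S : Set K) =
      {x : K | ∃ (a b : R), b ∉ m ∧ x * algebraMap R K b = algebraMap R K a} := by
  apply Set.Subset.antisymm hSm
  rintro x ⟨a, b, hb, hab⟩
  set bS : S := ⟨algebraMap R K b, hRS b⟩ with hbSdef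
  have hbu : IsUnit bS := by
    by_contra hnu
    obtain ⟨r, c, hc, hrc⟩ := hm.exists_inv hb
    set rS : S := ⟨algebraMap R K r, hRS r⟩ with hrSdef
    have hmem : rS * bS ∈ nonunits S := fun h => hnu (isUnit_of_mul_isUnit_right h)
    obtain ⟨u, hu⟩ := IsLocalRing.isUnit_one_sub_self_of_mem_nonunits _ hmem
    obtain ⟨a', b', hb', hab'⟩ := hSm (((u⁻¹ : Sˣ) : S)).2
    have hcK : ((u : S) : K) = algebraMap R K c := by
      have hc' : c = 1 - r * b := eq_sub_of_add_eq' hrc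
      rw [hu, hc']
      push_cast
      simp [hrSdef, hbSdef, map_sub, map_mul, map_one]
    have huu : (((u⁻¹ : Sˣ) : S) : K) * (((u : Sˣ) : S) : K) = 1 := by
      rw [← Subring.coe_mul]
      norm_cast
      simp
    have key : algebraMap R K b' = algebraMap R K (a' * c) := by
      have := congrArg (· * (((u : Sˣ) : S) : K)) hab'
      rw [mul_right_comm, huu, one_mul, hcK, ← map_mul] at this
      exact this
    have : b' = a' * c := IsFractionRing.injective R K key
    exact hb' (this ▸ m.mul_mem_left a' hc)
  obtain ⟨v, hv⟩ := hbu
  have hvinv : (((v⁻¹ : Sˣ) : S) : K) * algebraMap R K b = 1 := by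
    have : ((v⁻¹ : Sˣ) : S) * bS = 1 := by rw [← hv]; simp
    calc (((v⁻¹ : Sˣ) : S) : K) * algebraMap R K b
        = (((v⁻¹ : Sˣ) : S) * bS : S) := by rw [Subring.coe_mul]
      _ = 1 := by rw [this]; simp
  have hx : x = algebraMap R K a * (((v⁻¹ : Sˣ) : S) : K) := by
    rw [← hab, mul_assoc, mul_comm (algebraMap R K b), hvinv, mul_one]
  rw [hx]
  exact S.mul_mem (hRS a) ((v⁻¹ : Sˣ) : S).2
end

section
/- Let R be an integrally closed domain with fraction field L, let F|L be a finite separable field extension, and let R* be the integral closure of R in F. If x ∈ R* satisfies F = L(x), then the minimal polynomial f(X) of x over L has coefficients in R, and R* ⊆ f'(x)^{-1} R[x], i.e., for every b ∈ R*, b·f'(x) ∈ R[x]. -/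
theorem stmt_4 {R L F : Type*} [CommRing R] [IsDomain R] [IsIntegrallyClosed R]
    [Field L] [Algebra R L] [IsFractionRing R L]
    [Field F] [Algebra L F] [Algebra R F] [IsScalarTower R L F]
    [FiniteDimensional L F] [Algebra.IsSeparable L F]
    (x : F) (hx : x ∈ integralClosure R F)
    (hgen : Algebra.adjoin L {x} = ⊤) :
    (∀ n : ℕ, (minpoly L x).coeff n ∈ (algebraMap R L).range) ∧
    ∀ b ∈ integralClosure R F,
      b * (Polynomial.aeval x) (Polynomial.derivative (minpoly L x)) ∈
        Algebra.adjoin R {x} := by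
  have hxI : IsIntegral R x := hx
  constructor
  · intro n
    rw [minpoly.isIntegrallyClosed_eq_field_fractions' L hxI, Polynomial.coeff_map]
    exact ⟨(minpoly R x).coeff n, rfl⟩
  · intro b hb
    have hb' : IsIntegral R b := hb
    have hadj : Algebra.adjoin R {x} ≤ integralClosure R F :=
      Algebra.adjoin_le (Set.singleton_subset_iff.mpr hx)
    have key := traceForm_dualSubmodule_adjoin (A := R) (K := L) (L := F) hgen hxI
    have hbmem : b ∈ (Algebra.traceForm L F).dualSubmodule
        (Subalgebra.toSubmodule (Algebra.adjoin R {x})) := by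
      intro y hy
      have hy' : IsIntegral R y := hadj hy
      rw [Submodule.mem_one]
      exact IsIntegrallyClosed.isIntegral_iff.mp (Algebra.isIntegral_trace (hb'.mul hy'))
    rw [key] at hbmem
    obtain ⟨z, hz, hzb⟩ := hbmem
    have hd : (Polynomial.aeval x) (Polynomial.derivative (minpoly L x)) ≠ 0 :=
      (Algebra.IsSeparable.isSeparable L x).aeval_derivative_ne_zero (minpoly.aeval _ _)
    have : b * (Polynomial.aeval x) (Polynomial.derivative (minpoly L x)) = z := by
      rw [← hzb]; simp only [DistribSMul.toLinearMap_apply, smul_eq_mul]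
      field_simp
    rw [this]
    exact hz
end

section
/- Let R be a valuation ring of a field L, F|L a finite Galois extension, and R* the integral closure of R in F. Then R* has only finitely many maximal ideals. -/
set_option synthInstance.maxHeartbeats 1000000 in
set_option maxHeartbeats 1000000 in
theorem stmt_7 {L F : Type*} [Field L] [Field F] [Algebra L F]
    [FiniteDimensional L F] [IsGalois L F]
    (R : ValuationSubring L) [Algebra R F] [IsScalarTower R L F] :
    {m : Ideal (integralClosure R F) | m.IsMaximal}.Finite := by
  classical
  set B := integralClosure R F with hBdef
  obtain ⟨P₀, hP₀⟩ := Ideal.exists_maximal B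
  set G := F ≃ₐ[L] F
  set c : G → Ideal B := fun σ =>
    Ideal.comap ((galRestrict R L F B σ : B ≃ₐ[R] B) : B →+* B) P₀ with hc
  apply Set.Finite.subset (Set.finite_range c)
  intro Q hQ
  have hQm : Q.IsMaximal := hQ
  by_contra hQn
  have hne : ∀ σ : G, Q ≠ c σ := by
    intro σ h
    exact hQn ⟨σ, h.symm⟩
  have hprime : ∀ σ : G, (c σ).IsPrime := fun σ => Ideal.IsPrime.comap _
  -- Q is not contained in any c σ
  have hnle : ¬ ∃ σ ∈ (Finset.univ : Finset G), Q ≤ c σ := by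
    rintro ⟨σ, -, hle⟩
    exact hne σ (hQm.eq_of_le (hprime σ).ne_top hle)
  have hsub := (Ideal.subset_union_prime (s := (Finset.univ : Finset G))
    (f := c) 1 1 (fun σ _ _ _ => hprime σ) (I := Q)).not.mpr hnle
  rw [Set.not_subset] at hsub
  obtain ⟨x, hxQ, hxn⟩ := hsub
  have hx : ∀ σ : G, galRestrict R L F B σ x ∉ P₀ := by
    intro σ hmem
    apply hxn
    exact Set.mem_biUnion (Finset.mem_coe.mpr (Finset.mem_univ σ)) hmem
  -- the norm-like product
  set y : B := ∏ σ : G, galRestrict R L F B σ x with hy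
  have hyP₀ : y ∉ P₀ := by
    intro hmem
    obtain ⟨σ, -, hσ⟩ := (Ideal.IsPrime.prod_mem_iff (hp := hP₀.isPrime)).mp hmem
    exact hx σ hσ
  have hyQ : y ∈ Q := by
    have : y = galRestrict R L F B 1 x * ∏ σ ∈ (Finset.univ.erase 1), galRestrict R L F B σ x := by
      rw [hy, ← Finset.mul_prod_erase _ _ (Finset.mem_univ 1)]
    rw [this]
    have h1 : galRestrict R L F B 1 x = x := by
      simp [galRestrict_apply]
    rw [h1]
    exact Ideal.mul_mem_right _ _ hxQ
  -- y is in the image of R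
  obtain ⟨r, hr⟩ : ∃ r : R, algebraMap R B r = y := by
    refine ⟨_, (prod_galRestrict_eq_norm R L F B x).symm⟩
  -- comparing comaps
  have hmaxQ : (Q.comap (algebraMap R B)).IsMaximal :=
    Ideal.isMaximal_comap_of_isIntegral_of_isMaximal Q
  have hmaxP₀ : (P₀.comap (algebraMap R B)).IsMaximal :=
    Ideal.isMaximal_comap_of_isIntegral_of_isMaximal P₀
  have heq : Q.comap (algebraMap R B) = P₀.comap (algebraMap R B) := by
    rw [IsLocalRing.eq_maximalIdeal hmaxQ, IsLocalRing.eq_maximalIdeal hmaxP₀]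
  have : r ∈ Q.comap (algebraMap R B) := by
    simpa [Ideal.mem_comap, hr] using hyQ
  rw [heq] at this
  exact hyP₀ (by rwa [Ideal.mem_comap, hr] at this)
end

section
/- Let R be a valuation ring, f(X) ∈ R[X] a monic polynomial, and p a prime ideal of R. Set R[x] = R[X]/(f). Let f̄ = ∏_{i=1}^r f̄_i^{e_i} be the factorization of the reduction f̄ of f modulo p into powers of distinct irreducible polynomials in (R/p)[X]. Then the prime ideals of R[x] lying over p are precisely q_i = (p, f_i(x))R[x] for 1 ≤ i ≤ r; these are pairwise distinct, and R[x]/q_i ≅ (R/p)[X]/(f̄_i). -/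
open Polynomial Ideal

theorem valuationRing_quot {R : Type*} [CommRing R] [IsDomain R] [ValuationRing R]
    (p : Ideal R) [p.IsPrime] : ValuationRing (R ⧸ p) := by
  have : PreValuationRing (R ⧸ p) := ⟨fun a b => ?_⟩
  · exact ⟨⟩
  rename_i a b
  obtain ⟨a, rfl⟩ := Ideal.Quotient.mk_surjective a
  obtain ⟨b, rfl⟩ := Ideal.Quotient.mk_surjective b
  obtain ⟨c, hc | hc⟩ := ValuationRing.cond a b
  · exact ⟨Ideal.Quotient.mk p c, Or.inl (by rw [← _root_.map_mul, hc])⟩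
  · exact ⟨Ideal.Quotient.mk p c, Or.inr (by rw [← _root_.map_mul, hc])⟩

theorem aux_primes {A : Type*} [CommRing A] [IsDomain A] [ValuationRing A]
    (r : ℕ) (g : Fin r → Polynomial A) (e : Fin r → ℕ) (he : ∀ i, 0 < e i)
    (hirr : ∀ i, Irreducible (g i)) (hmon : (∏ i, g i ^ e i).Monic) :
    (∀ i, (Ideal.span {g i}).IsPrime ∧ (Ideal.span {g i}).comap (C : A →+* Polynomial A) = ⊥) ∧
    (∀ P : Ideal (Polynomial A), P.IsPrime → P.comap (C : A →+* Polynomial A) = ⊥ →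
      (∏ i, g i ^ e i) ∈ P → ∃ i, P = Ideal.span {g i}) := by
  classical
  set K := FractionRing A
  let α : A →+* K := algebraMap A K
  have hαinj : Function.Injective α := IsFractionRing.injective A K
  have hmapinj : Function.Injective (Polynomial.map α) :=
    Polynomial.map_injective α hαinj
  -- leading coefficients are units
  have hlc : ∀ i, IsUnit ((g i).leadingCoeff) := by
    intro i
    have h1 : (∏ i, g i ^ e i).leadingCoeff = 1 := hmon
    rw [leadingCoeff_prod] at h1
    have : (g i).leadingCoeff ∣ 1 := by
      rw [← h1]
      exact dvd_trans (dvd_pow_self _ (he i).ne')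
        (by rw [← leadingCoeff_pow]; exact Finset.dvd_prod_of_mem _ (Finset.mem_univ i))
    exact isUnit_of_dvd_one this
  -- positive degree
  have hdeg : ∀ i, 0 < (g i).natDegree := by
    intro i
    rcases Nat.eq_zero_or_pos (g i).natDegree with h0 | h
    · exfalso
      have := Polynomial.eq_C_of_natDegree_eq_zero h0
      apply (hirr i).not_isUnit
      rw [this]
      refine Polynomial.isUnit_C.mpr ?_
      have := hlc i
      rwa [Polynomial.leadingCoeff, h0] at this
    · exact h
  -- monic associates
  set u : Fin r → Aˣ := fun i => (hlc i).unit with hu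
  set gh : Fin r → Polynomial A := fun i => C (((u i)⁻¹ : Aˣ) : A) * g i with hgh
  have hghmon : ∀ i, (gh i).Monic := by
    intro i
    unfold gh
    rw [Monic, leadingCoeff_mul, leadingCoeff_C]
    have : (g i).leadingCoeff = (u i : A) := ((hlc i).unit_spec).symm
    rw [this, Units.inv_mul]
  have hassoc : ∀ i, Associated (g i) (gh i) := by
    intro i
    refine ⟨(Polynomial.isUnit_C.mpr ((u i)⁻¹.isUnit)).unit, ?_⟩
    rw [IsUnit.unit_spec]
    unfold gh; ring
  have hghirr : ∀ i, Irreducible (gh i) := fun i => (hassoc i).irreducible (hirr i)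
  have hghirrK : ∀ i, Irreducible ((gh i).map α) := fun i =>
    ((hghmon i).irreducible_iff_irreducible_map_fraction_map).mp (hghirr i)
  have hdvdiff : ∀ i (h : Polynomial A), gh i ∣ h ↔ (gh i).map α ∣ h.map α :=
    fun i h => (Polynomial.map_dvd_map α hαinj (hghmon i)).symm
  have hspan_eq : ∀ i, Ideal.span {g i} = Ideal.span {gh i} := fun i =>
    Ideal.span_singleton_eq_span_singleton.mpr (hassoc i)
  -- comap C of span = ⊥
  have hbot : ∀ i, (Ideal.span {g i}).comap (C : A →+* Polynomial A) = ⊥ := by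
    intro i
    rw [eq_bot_iff]
    intro a ha
    simp only [Ideal.mem_comap, Ideal.mem_span_singleton] at ha
    by_contra hne
    have haz : a ≠ 0 := fun h0 => hne (by rw [h0]; exact Ideal.zero_mem _)
    have := Polynomial.natDegree_le_of_dvd ha (by simpa using haz)
    rw [Polynomial.natDegree_C] at this
    have hd := hdeg i
    omega
  -- primality of span {g i}
  have hprime : ∀ i, (Ideal.span {g i}).IsPrime := by
    intro i
    have hKprime : Prime ((gh i).map α) := UniqueFactorizationMonoid.irreducible_iff_prime.mp (hghirrK i)
    have : Ideal.span {g i} =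
        Ideal.comap (mapRingHom α) (Ideal.span {(gh i).map α}) := by
      ext h
      simp only [Ideal.mem_comap, coe_mapRingHom, Ideal.mem_span_singleton, hspan_eq i]
      exact hdvdiff i h
    rw [this]
    haveI : (Ideal.span {(gh i).map α}).IsPrime :=
      (Ideal.span_singleton_prime (hghirrK i).ne_zero).mpr hKprime
    exact Ideal.IsPrime.comap _
  refine ⟨fun i => ⟨hprime i, hbot i⟩, ?_⟩
  intro P hP hP0 hfP
  obtain ⟨i, -, hgi⟩ := (Ideal.IsPrime.prod_mem_iff).mp hfP
  have hgiP : g i ∈ P := hP.mem_of_pow_mem _ hgi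
  refine ⟨i, le_antisymm ?_ (Ideal.span_le.mpr (by simpa using hgiP))⟩
  intro h hh
  rw [hspan_eq i, Ideal.mem_span_singleton]
  by_contra hnd
  have hndK : ¬ (gh i).map α ∣ h.map α := fun hc => hnd ((hdvdiff i h).mpr hc)
  have hcop : IsCoprime ((gh i).map α) (h.map α) :=
    (hghirrK i).coprime_iff_not_dvd.mpr hndK
  obtain ⟨a, b, hab⟩ := hcop
  obtain ⟨c1, ha1⟩ := IsLocalization.integerNormalization_map_to_map (nonZeroDivisors A) a
  obtain ⟨c2, hb1⟩ := IsLocalization.integerNormalization_map_to_map (nonZeroDivisors A) b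
  set a' := IsLocalization.integerNormalization (nonZeroDivisors A) a with ha'
  set b' := IsLocalization.integerNormalization (nonZeroDivisors A) b with hb'
  have hsmul : ∀ (c : A) (q : Polynomial K), c • q = C (α c) * q := by
    intro c q
    rw [← Polynomial.smul_eq_C_mul, algebraMap_smul]
  have hkey : (C (c2 : A) * a' * gh i + C (c1 : A) * b' * h).map α =
      (C ((c1 : A) * (c2 : A))).map α := by
    have ha1' : Polynomial.map α a' = C (α (c1 : A)) * a := by rw [← hsmul]; exact ha1
    have hb1' : Polynomial.map α b' = C (α (c2 : A)) * b := by rw [← hsmul]; exact hb1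
    simp only [Polynomial.map_add, Polynomial.map_mul, Polynomial.map_C, ha1', hb1', hsmul, _root_.map_mul]
    linear_combination (C (α (c1 : A)) * C (α (c2 : A))) * hab
  have hkey2 : C (c2 : A) * a' * gh i + C (c1 : A) * b' * h = C ((c1 : A) * (c2 : A)) :=
    hmapinj hkey
  have hmem : C ((c1 : A) * (c2 : A)) ∈ P := by
    rw [← hkey2]
    refine Ideal.add_mem _ (Ideal.mul_mem_left _ _ ?_) (Ideal.mul_mem_left _ _ hh)
    have : gh i ∈ P := by
      have := hspan_eq i
      have h1 : gh i ∈ Ideal.span {g i} := by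
        rw [this]; exact Ideal.mem_span_singleton_self _
      exact Ideal.span_le.mpr (by simpa using hgiP) h1
    exact this
  have : (c1 : A) * (c2 : A) ∈ Ideal.comap (C : A →+* Polynomial A) P := hmem
  rw [hP0] at this
  have hz : (c1 : A) * (c2 : A) = 0 := Ideal.mem_bot.mp this
  exact absurd hz (mul_ne_zero (mem_nonZeroDivisors_iff_ne_zero.mp c1.2)
    (mem_nonZeroDivisors_iff_ne_zero.mp c2.2))


theorem stmt_8 {R : Type*} [CommRing R] [IsDomain R] [ValuationRing R]
    (f : Polynomial R) (hf : f.Monic) (p : Ideal R) [p.IsPrime]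
    (r : ℕ) (fi : Fin r → Polynomial R) (e : Fin r → ℕ)
    (he : ∀ i, 0 < e i)
    (hirr : ∀ i, Irreducible ((fi i).map (Ideal.Quotient.mk p)))
    (hdist : ∀ i j, i ≠ j →
      ¬ Associated ((fi i).map (Ideal.Quotient.mk p)) ((fi j).map (Ideal.Quotient.mk p)))
    (hfact : f.map (Ideal.Quotient.mk p) =
      ∏ i, ((fi i).map (Ideal.Quotient.mk p)) ^ e i)
    (Q : Fin r → Ideal (AdjoinRoot f))
    (hQ : ∀ i, Q i = p.map (algebraMap R (AdjoinRoot f)) ⊔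
      Ideal.span {Polynomial.aeval (AdjoinRoot.root f) (fi i)}) :
    (∀ i, (Q i).IsPrime ∧ (Q i).comap (algebraMap R (AdjoinRoot f)) = p) ∧
    (∀ q : Ideal (AdjoinRoot f), q.IsPrime →
      q.comap (algebraMap R (AdjoinRoot f)) = p → ∃ i, q = Q i) ∧
    (∀ i j, i ≠ j → Q i ≠ Q j) ∧
    (∀ i, Nonempty ((AdjoinRoot f ⧸ Q i) ≃+*
      (Polynomial (R ⧸ p) ⧸ Ideal.span {(fi i).map (Ideal.Quotient.mk p)}))) := by
  classical
  haveI := valuationRing_quot p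
  set φ := Ideal.Quotient.mk p with hφ
  set g : Fin r → Polynomial (R ⧸ p) := fun i => (fi i).map φ with hg
  have hmon : (∏ i, g i ^ e i).Monic := by rw [← hfact]; exact hf.map φ
  obtain ⟨haux1, haux2⟩ := aux_primes r g e he hirr hmon
  set σ : Polynomial R →+* Polynomial (R ⧸ p) := mapRingHom φ with hσ
  have hσsurj : Function.Surjective σ := by
    intro h
    obtain ⟨h', hh'⟩ := Polynomial.map_surjective φ Ideal.Quotient.mk_surjective h
    exact ⟨h', hh'⟩
  have hσker : RingHom.ker σ = p.map (C : R →+* Polynomial R) := by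
    rw [hσ, Polynomial.ker_mapRingHom, Ideal.mk_ker]
  have hσf : σ f = ∏ i, g i ^ e i := by rw [← hfact]; rfl
  have hσfi : ∀ i, σ (fi i) = g i := fun i => rfl
  have kermk : RingHom.ker (AdjoinRoot.mk f) = Ideal.span {f} := Ideal.mk_ker
  have halg : algebraMap R (AdjoinRoot f) = (AdjoinRoot.mk f).comp (C : R →+* Polynomial R) := by
    rw [AdjoinRoot.algebraMap_eq]; rfl
  set T : Fin r → Ideal (Polynomial R) := fun i => Ideal.comap σ (Ideal.span {g i}) with hT
  have hTprime : ∀ i, (T i).IsPrime := by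
    intro i
    haveI := (haux1 i).1
    exact Ideal.IsPrime.comap σ
  have hTC : ∀ i, (T i).comap (C : R →+* Polynomial R) = p := by
    intro i
    ext a
    have : σ (C a) = C (φ a) := Polynomial.map_C φ
    simp only [Ideal.mem_comap, hT, this]
    constructor
    · intro hmem
      have : φ a ∈ (Ideal.span {g i}).comap (C : (R ⧸ p) →+* Polynomial (R ⧸ p)) := hmem
      rw [(haux1 i).2] at this
      have : φ a = 0 := Ideal.mem_bot.mp this
      rwa [← RingHom.mem_ker, Ideal.mk_ker] at this
    · intro hmem
      have : φ a = 0 := by rwa [← Ideal.mk_ker (I := p), RingHom.mem_ker] at hmem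
      rw [this]
      simp
  have hfT : ∀ i, f ∈ T i := by
    intro i
    show σ f ∈ Ideal.span {g i}
    rw [hσf, Ideal.mem_span_singleton]
    exact dvd_trans (dvd_pow_self _ (he i).ne') (Finset.dvd_prod_of_mem _ (Finset.mem_univ i))
  have hkerT : ∀ i, RingHom.ker σ ≤ T i := by
    intro i
    rw [hσker]
    rw [Ideal.map_le_iff_le_comap]
    intro a ha
    show C a ∈ T i
    have := hTC i
    rw [← this] at ha
    exact ha
  have hQT : ∀ i, Q i = Ideal.map (AdjoinRoot.mk f) (T i) := by
    intro i
    rw [hQ i]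
    apply le_antisymm
    · apply sup_le
      · rw [halg, ← Ideal.map_map]
        apply Ideal.map_mono
        rw [Ideal.map_le_iff_le_comap]
        intro a ha
        show C a ∈ T i
        rw [← hTC i] at ha
        exact ha
      · rw [Ideal.span_le]
        intro x hx
        simp only [Set.mem_singleton_iff] at hx
        subst hx
        rw [AdjoinRoot.aeval_eq]
        exact Ideal.mem_map_of_mem _ (show σ (fi i) ∈ Ideal.span {g i} by
          rw [hσfi]; exact Ideal.mem_span_singleton_self _)
    · rw [Ideal.map_le_iff_le_comap]
      intro h hh
      have : σ h ∈ Ideal.span {g i} := hh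
      rw [Ideal.mem_span_singleton] at this
      obtain ⟨k, hk⟩ := this
      obtain ⟨k', rfl⟩ := hσsurj k
      have hker : h - fi i * k' ∈ RingHom.ker σ := by
        rw [RingHom.mem_ker, _root_.map_sub, _root_.map_mul, hσfi, hk]
        ring
      rw [hσker] at hker
      have hdecomp : AdjoinRoot.mk f h =
          AdjoinRoot.mk f (fi i * k') + AdjoinRoot.mk f (h - fi i * k') := by
        rw [← _root_.map_add]; ring_nf
      refine Ideal.mem_comap.mpr ?_
      rw [hdecomp]
      refine Ideal.add_mem _ ?_ ?_
      · refine Ideal.mem_sup_right ?_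
        rw [_root_.map_mul]
        refine Ideal.mul_mem_right _ _ ?_
        rw [Ideal.mem_span_singleton]
        exact ⟨1, by rw [AdjoinRoot.aeval_eq, mul_one]⟩
      · refine Ideal.mem_sup_left ?_
        rw [halg, ← Ideal.map_map]
        exact Ideal.mem_map_of_mem _ hker
  have hTQ : ∀ i, Ideal.comap (AdjoinRoot.mk f) (Q i) = T i := by
    intro i
    rw [hQT i, Ideal.comap_map_of_surjective _ AdjoinRoot.mk_surjective]
    rw [sup_eq_left]
    rw [← RingHom.ker_eq_comap_bot, kermk, Ideal.span_le]
    intro x hx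
    simp only [Set.mem_singleton_iff] at hx
    subst hx
    exact hfT i
  have hQprime : ∀ i, (Q i).IsPrime := by
    intro i
    rw [hQT i]
    haveI := hTprime i
    refine Ideal.map_isPrime_of_surjective AdjoinRoot.mk_surjective ?_
    rw [kermk, Ideal.span_le]
    intro x hx
    simp only [Set.mem_singleton_iff] at hx
    subst hx
    exact hfT i
  have hQcomap : ∀ i, (Q i).comap (algebraMap R (AdjoinRoot f)) = p := by
    intro i
    rw [halg, ← Ideal.comap_comap, hTQ i, hTC i]
  refine ⟨fun i => ⟨hQprime i, hQcomap i⟩, ?_, ?_, ?_⟩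
  · -- uniqueness
    intro q hq hqc
    set T' := Ideal.comap (AdjoinRoot.mk f) q with hT'
    haveI : T'.IsPrime := Ideal.IsPrime.comap _
    have hT'C : T'.comap (C : R →+* Polynomial R) = p := by
      rw [hT', Ideal.comap_comap, ← halg, hqc]
    have hkerσT' : RingHom.ker σ ≤ T' := by
      rw [hσker, Ideal.map_le_iff_le_comap]
      intro a ha
      show C a ∈ T'
      rw [← hT'C] at ha
      exact ha
    have hfT' : f ∈ T' := by
      show AdjoinRoot.mk f f ∈ q
      rw [AdjoinRoot.mk_self]
      exact q.zero_mem
    set P := Ideal.map σ T' with hP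
    haveI hPprime : P.IsPrime := Ideal.map_isPrime_of_surjective hσsurj hkerσT'
    have hT'P : Ideal.comap σ P = T' := by
      rw [hP, Ideal.comap_map_of_surjective _ hσsurj, ← RingHom.ker_eq_comap_bot,
        sup_eq_left]
      exact hkerσT'
    have hPC : P.comap (C : (R ⧸ p) →+* Polynomial (R ⧸ p)) = ⊥ := by
      rw [eq_bot_iff]
      intro a ha
      obtain ⟨a', rfl⟩ := Ideal.Quotient.mk_surjective a
      have : σ (C a') ∈ P := by
        have : σ (C a') = C (φ a') := Polynomial.map_C φ
        rw [this]
        exact ha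
      rw [← Ideal.mem_comap, hT'P] at this
      have : a' ∈ T'.comap (C : R →+* Polynomial R) := this
      rw [hT'C] at this
      have : φ a' = 0 := by rwa [← Ideal.mk_ker (I := p), RingHom.mem_ker] at this
      show φ a' ∈ (⊥ : Ideal (R ⧸ p))
      rw [this]
      exact Ideal.zero_mem ⊥
    have hfP : (∏ i, g i ^ e i) ∈ P := by
      rw [← hσf]
      exact Ideal.mem_map_of_mem _ hfT'
    obtain ⟨i, hPi⟩ := haux2 P hPprime hPC hfP
    refine ⟨i, ?_⟩
    have hq' : q = Ideal.map (AdjoinRoot.mk f) T' := by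
      rw [hT', Ideal.map_comap_of_surjective _ AdjoinRoot.mk_surjective]
    rw [hq', hQT i]
    congr 1
    rw [← hT'P, hPi]
  · -- distinct
    intro i j hij hQeq
    apply hdist i j hij
    have hTeq : T i = T j := by rw [← hTQ i, ← hTQ j, hQeq]
    have : Ideal.span {g i} = Ideal.span {g j} := by
      have hmi : Ideal.map σ (T i) = Ideal.span {g i} :=
        Ideal.map_comap_of_surjective _ hσsurj _
      have hmj : Ideal.map σ (T j) = Ideal.span {g j} :=
        Ideal.map_comap_of_surjective _ hσsurj _
      rw [← hmi, ← hmj, hTeq]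
    exact Ideal.span_singleton_eq_span_singleton.mp this
  · -- quotient isomorphism
    intro i
    set θ1 : Polynomial R →+* AdjoinRoot f ⧸ Q i :=
      (Ideal.Quotient.mk (Q i)).comp (AdjoinRoot.mk f) with hθ1
    have hθ1surj : Function.Surjective θ1 :=
      (Ideal.Quotient.mk_surjective).comp AdjoinRoot.mk_surjective
    have hθ1ker : RingHom.ker θ1 = T i := by
      rw [hθ1, ← RingHom.comap_ker, Ideal.mk_ker, hTQ i]
    set θ2 : Polynomial R →+* Polynomial (R ⧸ p) ⧸ Ideal.span {g i} :=
      (Ideal.Quotient.mk (Ideal.span {g i})).comp σ with hθ2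
    have hθ2surj : Function.Surjective θ2 :=
      (Ideal.Quotient.mk_surjective).comp hσsurj
    have hθ2ker : RingHom.ker θ2 = T i := by
      rw [hθ2, ← RingHom.comap_ker, Ideal.mk_ker, hT]
    exact ⟨(((RingHom.quotientKerEquivOfSurjective hθ1surj).symm).trans
      (Ideal.quotEquivOfEq (hθ1ker.trans hθ2ker.symm))).trans
      (RingHom.quotientKerEquivOfSurjective hθ2surj)⟩
end

section
/- Let A ⊆ B be an extension of commutative rings with 1 and let b ∈ B be a unit of B that is a henselian element over A. Then b^{-1} is also a henselian element over A. -/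
open Polynomial Finset

theorem stmt_9 {A B : Type*} [CommRing A] [CommRing B] [Algebra A B]
    (hinj : Function.Injective (algebraMap A B))
    (b c : B) (hbc : b * c = 1)
    (hhens : ∃ h : Polynomial A, Polynomial.aeval b h = 0 ∧
      IsUnit (Polynomial.aeval b (Polynomial.derivative h))) :
    ∃ g : Polynomial A, Polynomial.aeval c g = 0 ∧
      IsUnit (Polynomial.aeval c (Polynomial.derivative g)) := by
  obtain ⟨h, hzero, hunit⟩ := hhens
  set n := h.natDegree with hn
  by_cases hn0 : n = 0
  · -- then derivative h = 0, so IsUnit 0, ring is trivial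
    have hd : derivative h = 0 := by
      rw [Polynomial.eq_C_of_natDegree_eq_zero hn0]; simp
    rw [hd, map_zero] at hunit
    have : Subsingleton B := subsingleton_of_zero_eq_one (isUnit_zero_iff.mp hunit)
    exact ⟨0, Subsingleton.elim _ _, by simpa using hunit⟩
  have hn1 : 1 ≤ n := Nat.one_le_iff_ne_zero.mpr hn0
  have hcb : c * b = 1 := by rwa [mul_comm]
  letI : Invertible b := ⟨c, hcb, hbc⟩
  have hbu : IsUnit b := ⟨⟨b, c, hbc, hcb⟩, rfl⟩
  refine ⟨h.reverse, ?_, ?_⟩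
  · have := (Polynomial.eval₂_reverse_eq_zero_iff (algebraMap A B) b h).mpr
      (by rwa [Polynomial.aeval_def] at hzero)
    rwa [Polynomial.aeval_def]
  -- key computation
  set g := h.reverse with hg
  have hgdeg : (derivative g).natDegree < n := by
    calc (derivative g).natDegree ≤ g.natDegree - 1 := natDegree_derivative_le g
    _ ≤ n - 1 := Nat.sub_le_sub_right h.reverse_natDegree_le 1
    _ < n := Nat.sub_lt hn1 one_pos
  have hhdeg : (derivative h).natDegree < n := by
    calc (derivative h).natDegree ≤ n - 1 := natDegree_derivative_le h
    _ < n := Nat.sub_lt hn1 one_pos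
  set D := Polynomial.aeval c (derivative g) with hD
  set H' := Polynomial.aeval b (derivative h) with hH'
  have hDsum : D = ∑ i ∈ range n,
      algebraMap A B (h.coeff (n - 1 - i) * (i + 1 : ℕ)) * c ^ i := by
    rw [hD, Polynomial.aeval_eq_sum_range' hgdeg]
    refine Finset.sum_congr rfl fun i hi => ?_
    rw [Finset.mem_range] at hi
    rw [Algebra.smul_def, Polynomial.coeff_derivative, hg, Polynomial.coeff_reverse,
      Polynomial.revAt_le (by omega : i + 1 ≤ h.natDegree),
      show h.natDegree - (i + 1) = n - 1 - i by omega]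
    push_cast
    ring
  have hH'sum : H' = ∑ i ∈ range n,
      algebraMap A B (h.coeff (i + 1) * (i + 1 : ℕ)) * b ^ i := by
    rw [hH', Polynomial.aeval_eq_sum_range' hhdeg]
    refine Finset.sum_congr rfl fun i hi => ?_
    rw [Algebra.smul_def, Polynomial.coeff_derivative]
    push_cast
    rfl
  have hSsum : (0 : B) = ∑ j ∈ range (n + 1), algebraMap A B (h.coeff j) * b ^ j := by
    rw [← hzero, Polynomial.aeval_eq_sum_range' (Nat.lt_succ_self n)]
    exact Finset.sum_congr rfl fun i _ => Algebra.smul_def _ _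
  -- main identity : b^(n-1) * D = -(b * H')
  have key : b ^ (n - 1) * D + b * H' = 0 := by
    have e1 : b ^ (n - 1) * D = ∑ i ∈ range n,
        algebraMap A B (h.coeff (n - 1 - i) * ((n - (n - 1 - i) : ℕ))) * b ^ (n - 1 - i) := by
      rw [hDsum, Finset.mul_sum]
      refine Finset.sum_congr rfl fun i hi => ?_
      rw [Finset.mem_range] at hi
      have hb : b ^ (n - 1) * c ^ i = b ^ (n - 1 - i) := by
        have : b ^ (n - 1) = b ^ (n - 1 - i) * b ^ i := by
          rw [← pow_add]; congr 1; omega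
        rw [this, mul_assoc, ← mul_pow, hbc, one_pow, mul_one]
      rw [show (n - (n - 1 - i) : ℕ) = i + 1 by omega, ← hb]
      ring
    rw [e1, Finset.sum_range_reflect
      (fun j => algebraMap A B (h.coeff j * ((n - j : ℕ))) * b ^ j) n]
    have e2 : b * H' = ∑ i ∈ range n,
        algebraMap A B (h.coeff (i + 1) * ((i + 1 : ℕ))) * b ^ (i + 1) := by
      rw [hH'sum, Finset.mul_sum]
      refine Finset.sum_congr rfl fun i _ => by ring
    rw [e2]
    have e3 : ∑ i ∈ range n, algebraMap A B (h.coeff i * ((n - i : ℕ))) * b ^ i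
        = ∑ j ∈ range (n + 1), algebraMap A B (h.coeff j * ((n - j : ℕ))) * b ^ j := by
      rw [Finset.sum_range_succ]
      simp
    have e4 : ∑ i ∈ range n, algebraMap A B (h.coeff (i + 1) * ((i + 1 : ℕ))) * b ^ (i + 1)
        = ∑ j ∈ range (n + 1), algebraMap A B (h.coeff j * ((j : ℕ))) * b ^ j := by
      rw [Finset.sum_range_succ' (fun j => algebraMap A B (h.coeff j * ((j : ℕ))) * b ^ j) n]
      simp
    rw [e3, e4, ← Finset.sum_add_distrib]
    have : ∀ j ∈ range (n + 1),
        algebraMap A B (h.coeff j * ((n - j : ℕ))) * b ^ j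
          + algebraMap A B (h.coeff j * ((j : ℕ))) * b ^ j
        = algebraMap A B ((n : A)) * (algebraMap A B (h.coeff j) * b ^ j) := by
      intro j hj
      rw [Finset.mem_range] at hj
      have : ((n - j : ℕ) : A) + ((j : ℕ) : A) = (n : A) := by
        rw [Nat.cast_sub (by omega)]; ring
      rw [← this]
      simp only [map_mul, map_add]
      ring
    rw [Finset.sum_congr rfl this, ← Finset.mul_sum, ← hSsum, mul_zero]
  -- conclude
  have keq : b ^ (n - 1) * D = b * (-H') := by
    rw [mul_neg]; linear_combination key
  have : IsUnit (b ^ (n - 1) * D) := by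
    rw [keq]
    exact (hbu.mul (hunit.neg))
  exact (isUnit_of_mul_isUnit_right this)
end

section
/- Let R ⊆ S be an integral extension of domains such that the induced extension K ⊆ L of fraction fields is purely inseparable, and assume R = K ∩ S. Then the restriction map Spec(S) → Spec(R), Q ↦ Q ∩ R, is an isomorphism of partially ordered sets; in particular, over every prime P of R lies exactly one prime of S, namely the radical of PS. -/
theorem stmt_13 {R S K L : Type*} [CommRing R] [IsDomain R] [CommRing S] [IsDomain S]
    [Algebra R S] [Algebra.IsIntegral R S]
    [Field K] [Algebra R K] [IsFractionRing R K]
    [Field L] [Algebra S L] [IsFractionRing S L]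
    [Algebra K L] [IsPurelyInseparable K L]
    [Algebra R L] [IsScalarTower R S L] [IsScalarTower R K L]
    (hRKS : ∀ x : S, (∃ k : K, algebraMap K L k = algebraMap S L x) →
      ∃ r : R, algebraMap R S r = x) :
    (∃ e : {Q : Ideal S // Q.IsPrime} ≃o {P : Ideal R // P.IsPrime},
      ∀ Q : {Q : Ideal S // Q.IsPrime},
        (e Q : Ideal R) = (Q : Ideal S).comap (algebraMap R S)) ∧
    ∀ P : Ideal R, P.IsPrime →
      (∃! Q : Ideal S, Q.IsPrime ∧ Q.comap (algebraMap R S) = P) ∧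
      (P.map (algebraMap R S)).radical.IsPrime ∧
      (P.map (algebraMap R S)).radical.comap (algebraMap R S) = P := by
  classical
  set q := ringExpChar K with hq
  have hqchar : ExpChar K q := ringExpChar.expChar K
  -- key: every s : S has a power that comes from R
  have key : ∀ s : S, ∃ (n : ℕ) (r : R), algebraMap R S r = s ^ q ^ n := by
    intro s
    obtain ⟨n, k, hk⟩ := IsPurelyInseparable.pow_mem K q (algebraMap S L s)
    obtain ⟨r, hr⟩ := hRKS (s ^ q ^ n) ⟨k, by rw [hk, map_pow]⟩
    exact ⟨n, r, hr⟩
  have hqpos : ∀ n : ℕ, 0 < q ^ n := fun n =>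
    pow_pos (expChar_pos K q) n
  -- membership transfer
  have mem_iff : ∀ (Q : Ideal S), Q.IsPrime → ∀ s : S, s ∈ Q ↔
      ∃ (n : ℕ) (r : R), algebraMap R S r = s ^ q ^ n ∧ r ∈ Q.comap (algebraMap R S) := by
    intro Q hQ s
    constructor
    · intro hs
      obtain ⟨n, r, hr⟩ := key s
      exact ⟨n, r, hr, by simp [Ideal.mem_comap, hr, Ideal.pow_mem_of_mem Q hs _ (hqpos n)]⟩
    · rintro ⟨n, r, hr, hrQ⟩
      have : s ^ q ^ n ∈ Q := by rw [← hr]; exact hrQ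
      exact hQ.mem_of_pow_mem _ this
  -- comap reflects inclusion on primes
  have le_iff : ∀ (Q₁ Q₂ : Ideal S), Q₁.IsPrime → Q₂.IsPrime →
      (Q₁ ≤ Q₂ ↔ Q₁.comap (algebraMap R S) ≤ Q₂.comap (algebraMap R S)) := by
    intro Q₁ Q₂ h₁ h₂
    refine ⟨fun h => Ideal.comap_mono h, fun h s hs => ?_⟩
    obtain ⟨n, r, hr, hrQ⟩ := (mem_iff Q₁ h₁ s).1 hs
    exact (mem_iff Q₂ h₂ s).2 ⟨n, r, hr, h hrQ⟩
  have inj : ∀ (Q₁ Q₂ : Ideal S), Q₁.IsPrime → Q₂.IsPrime →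
      Q₁.comap (algebraMap R S) = Q₂.comap (algebraMap R S) → Q₁ = Q₂ := by
    intro Q₁ Q₂ h₁ h₂ h
    exact le_antisymm ((le_iff Q₁ Q₂ h₁ h₂).2 h.le) ((le_iff Q₂ Q₁ h₂ h₁).2 h.ge)
  -- algebraMap R S is injective
  have hinj : Function.Injective (algebraMap R S) := by
    intro a b hab
    have := congrArg (algebraMap S L) hab
    rw [← IsScalarTower.algebraMap_apply, ← IsScalarTower.algebraMap_apply,
      IsScalarTower.algebraMap_apply R K L, IsScalarTower.algebraMap_apply R K L] at this
    exact IsFractionRing.injective R K ((algebraMap K L).injective this)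
  -- surjectivity: lying over
  have surj : ∀ (P : Ideal R), P.IsPrime →
      ∃ Q : Ideal S, Q.IsPrime ∧ Q.comap (algebraMap R S) = P := by
    intro P hP
    exact Ideal.exists_ideal_over_prime_of_isIntegral_of_isDomain P
      (by rw [(RingHom.injective_iff_ker_eq_bot _).1 hinj]; exact bot_le)
  -- build the map
  let f : {Q : Ideal S // Q.IsPrime} → {P : Ideal R // P.IsPrime} :=
    fun Q => ⟨(Q : Ideal S).comap (algebraMap R S), Ideal.IsPrime.comap (f := algebraMap R S) (hK := Q.2)⟩
  have hfbij : Function.Bijective f := by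
    constructor
    · rintro ⟨Q₁, h₁⟩ ⟨Q₂, h₂⟩ h
      exact Subtype.ext (inj Q₁ Q₂ h₁ h₂ (congrArg Subtype.val h))
    · rintro ⟨P, hP⟩
      obtain ⟨Q, hQ, hQ'⟩ := surj P hP
      exact ⟨⟨Q, hQ⟩, Subtype.ext hQ'⟩
  let e : {Q : Ideal S // Q.IsPrime} ≃o {P : Ideal R // P.IsPrime} :=
    { toEquiv := Equiv.ofBijective f hfbij
      map_rel_iff' := by
        rintro ⟨Q₁, h₁⟩ ⟨Q₂, h₂⟩
        exact (le_iff Q₁ Q₂ h₁ h₂).symm }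
  refine ⟨⟨e, fun Q => rfl⟩, fun P hP => ?_⟩
  obtain ⟨Q, hQ, hQ'⟩ := surj P hP
  have hrad : (P.map (algebraMap R S)).radical = Q := by
    apply le_antisymm
    · rw [hQ.radical_le_iff, Ideal.map_le_iff_le_comap, hQ']
    · intro s hs
      obtain ⟨n, r, hr, hrQ⟩ := (mem_iff Q hQ s).1 hs
      have hrP : r ∈ P := by rwa [← hQ']
      refine Ideal.mem_radical_of_pow_mem (m := q ^ n) (Ideal.le_radical ?_)
      rw [← hr]
      exact Ideal.mem_map_of_mem _ hrP
  refine ⟨⟨Q, ⟨hQ, hQ'⟩, ?_⟩, ?_, ?_⟩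
  · rintro Q' ⟨hQ'p, hQ'c⟩
    exact inj Q' Q hQ'p hQ (by rw [hQ'c, hQ'])
  · rw [hrad]; exact hQ
  · rw [hrad, hQ']
end

section
/- Let R be a domain with fraction field K. For every chain C of prime ideals of R there exists a valuation ring O of K containing R and a chain C_O of prime ideals of O such that the restriction of C_O to R equals C, i.e., { P ∩ R : P ∈ C_O } = C. -/
section helpers

variable {K : Type*} [Field K]

/-- `x` lies in the maximal ideal of the valuation subring `W`, phrased field-theoretically. -/
def InMax (W : ValuationSubring K) (x : K) : Prop :=
  x ∈ W ∧ ¬(x ≠ 0 ∧ x⁻¹ ∈ W)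

lemma InMax.mem {W : ValuationSubring K} {x : K} (h : InMax W x) : x ∈ W := h.1

lemma isUnit_subtype_iff (W : ValuationSubring K) (x : W) :
    IsUnit x ↔ ((x : K) ≠ 0 ∧ (x : K)⁻¹ ∈ W) := by
  constructor
  · rintro ⟨u, rfl⟩
    have h : ((u.val : W) : K) * ((u.inv : W) : K) = 1 := by
      exact_mod_cast congrArg (fun w : W => (w : K)) u.val_inv
    refine ⟨fun h0 => by simp [h0] at h, ?_⟩
    rw [inv_eq_of_mul_eq_one_right h]
    exact (u.inv : W).2
  · rintro ⟨h0, hinv⟩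
    exact isUnit_iff_exists_inv.mpr ⟨⟨(x : K)⁻¹, hinv⟩, Subtype.ext (mul_inv_cancel₀ h0)⟩

lemma inMax_iff {W : ValuationSubring K} {x : K} :
    InMax W x ↔ ∃ hx : x ∈ W, ¬ IsUnit (⟨x, hx⟩ : W) := by
  constructor
  · rintro ⟨hx, h⟩
    exact ⟨hx, fun hu => h ((isUnit_subtype_iff W _).mp hu)⟩
  · rintro ⟨hx, h⟩
    exact ⟨hx, fun hc => h ((isUnit_subtype_iff W _).mpr hc)⟩

lemma InMax.zero (W : ValuationSubring K) : InMax W 0 :=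
  ⟨zero_mem _, fun h => h.1 rfl⟩

lemma InMax.add {W : ValuationSubring K} {x y : K} (hx : InMax W x) (hy : InMax W y) :
    InMax W (x + y) := by
  rw [inMax_iff] at hx hy ⊢
  obtain ⟨hx1, hx2⟩ := hx
  obtain ⟨hy1, hy2⟩ := hy
  refine ⟨add_mem hx1 hy1, fun hu => ?_⟩
  have : (⟨x + y, add_mem hx1 hy1⟩ : W) = ⟨x, hx1⟩ + ⟨y, hy1⟩ := by ext; simp
  rw [this] at hu
  exact (IsLocalRing.nonunits_add (fun h => hx2 h) (fun h => hy2 h)) hu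

lemma InMax.mul_left {W : ValuationSubring K} {x y : K} (hx : x ∈ W) (hy : InMax W y) :
    InMax W (x * y) := by
  rw [inMax_iff] at hy ⊢
  obtain ⟨hy1, hy2⟩ := hy
  refine ⟨mul_mem hx hy1, fun hu => ?_⟩
  have : (⟨x * y, mul_mem hx hy1⟩ : W) = ⟨x, hx⟩ * ⟨y, hy1⟩ := by ext; simp
  rw [this] at hu
  exact hy2 (isUnit_of_mul_isUnit_right hu)

lemma InMax.neg {W : ValuationSubring K} {x : K} (hx : InMax W x) : InMax W (-x) := by
  have := InMax.mul_left (neg_mem (one_mem W.toSubring)) hx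
  simpa using this

lemma InMax.sub {W : ValuationSubring K} {x y : K} (hx : InMax W x) (hy : InMax W y) :
    InMax W (x - y) := by
  rw [sub_eq_add_neg]; exact hx.add hy.neg

lemma inMax_inv_of_not_mem {W : ValuationSubring K} {x : K} (hx : x ∉ W) : InMax W x⁻¹ := by
  refine ⟨(W.mem_or_inv_mem x).resolve_left hx, fun h => ?_⟩
  rw [inv_inv] at h
  exact hx h.2

lemma not_inMax_one (W : ValuationSubring K) : ¬ InMax W 1 := by
  rintro ⟨-, h⟩
  exact h ⟨one_ne_zero, by simpa using one_mem W.toSubring⟩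

lemma InMax.or {W : ValuationSubring K} {x y : K} (hx : x ∈ W) (hy : y ∈ W)
    (h : InMax W (x * y)) : InMax W x ∨ InMax W y := by
  by_contra hc
  push_neg at hc
  obtain ⟨h1, h2⟩ := hc
  have hx' : x ≠ 0 ∧ x⁻¹ ∈ W := by
    by_contra h'; exact h1 ⟨hx, h'⟩
  have hy' : y ≠ 0 ∧ y⁻¹ ∈ W := by
    by_contra h'; exact h2 ⟨hy, h'⟩
  exact h.2 ⟨mul_ne_zero hx'.1 hy'.1, by rw [mul_inv]; exact mul_mem hx'.2 hy'.2⟩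

end helpers

section helpers2

variable {K : Type*} [Field K]

lemma InMax.mul_right {W : ValuationSubring K} {x y : K} (hx : InMax W x) (hy : y ∈ W) :
    InMax W (x * y) := by
  rw [mul_comm]; exact InMax.mul_left hy hx

lemma subring_isUnit_iff {S : Subring K} (x : S) :
    IsUnit x ↔ ∃ y ∈ S, (x : K) * y = 1 := by
  constructor
  · rintro ⟨u, rfl⟩
    refine ⟨((u.inv : S) : K), (u.inv : S).2, ?_⟩
    exact_mod_cast congrArg (fun w : S => (w : K)) u.val_inv
  · rintro ⟨y, hy, h⟩
    exact isUnit_iff_exists_inv.mpr ⟨⟨y, hy⟩, Subtype.ext h⟩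

end helpers2

section stepsec

variable {R : Type*} [CommRing R] {K : Type*} [Field K] [Algebra R K]

theorem exists_valuationSubring_step (W : ValuationSubring K)
    (hRW : ∀ r : R, algebraMap R K r ∈ W)
    (P : Ideal R) (hP : P.IsPrime)
    (hle : ∀ r : R, InMax W (algebraMap R K r) → r ∈ P) :
    ∃ W' : ValuationSubring K, W'.toSubring ≤ W.toSubring ∧
      (∀ r : R, algebraMap R K r ∈ W') ∧
      (∀ r : R, InMax W' (algebraMap R K r) ↔ r ∈ P) := by
  set f := algebraMap R K with hf
  have haux : ∀ (r s : R) (m n : K), InMax W m → InMax W n →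
      InMax W (f r * n + m * f s + m * n) :=
    fun r s m n hm hn => ((InMax.mul_left (hRW r) hn).add (hm.mul_right (hRW s))).add
      (InMax.mul_left hm.mem hn)
  -- the subring R + m_W
  set T : Subring K :=
    { carrier := {x | ∃ r : R, ∃ m : K, InMax W m ∧ x = f r + m}
      one_mem' := ⟨1, 0, InMax.zero W, by simp⟩
      mul_mem' := by
        rintro x y ⟨r, m, hm, rfl⟩ ⟨s, n, hn, rfl⟩
        exact ⟨r * s, f r * n + m * f s + m * n, haux r s m n hm hn, by rw [map_mul]; ring⟩
      add_mem' := by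
        rintro x y ⟨r, m, hm, rfl⟩ ⟨s, n, hn, rfl⟩
        exact ⟨r + s, m + n, hm.add hn, by rw [map_add]; ring⟩
      zero_mem' := ⟨0, 0, InMax.zero W, by simp⟩
      neg_mem' := by
        rintro x ⟨r, m, hm, rfl⟩
        exact ⟨-r, -m, hm.neg, by rw [map_neg]; ring⟩ } with hT
  have hmemT : ∀ r : R, f r ∈ T := fun r => ⟨r, 0, InMax.zero W, by simp⟩
  -- key: representations are unique modulo P
  have hkey : ∀ (r : R) (m : K), InMax W m → ∀ p : R, p ∈ P → ∀ m' : K, InMax W m' →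
      f r + m = f p + m' → r ∈ P := by
    intro r m hm p hp m' hm' heq
    have h1 : f (r - p) = m' - m := by
      rw [map_sub]; linear_combination heq
    have h2 : InMax W (f (r - p)) := by rw [h1]; exact hm'.sub hm
    have h3 : r = (r - p) + p := by ring
    rw [h3]
    exact P.add_mem (hle _ h2) hp
  set Qset : Set K := {x | ∃ p : R, p ∈ P ∧ ∃ m : K, InMax W m ∧ x = f p + m} with hQset
  set Q : Ideal T :=
    { carrier := {x : T | (x : K) ∈ Qset}
      zero_mem' := ⟨0, P.zero_mem, 0, InMax.zero W, by simp⟩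
      add_mem' := by
        rintro x y ⟨p, hp, m, hm, hx⟩ ⟨q, hq, n, hn, hy⟩
        refine ⟨p + q, P.add_mem hp hq, m + n, hm.add hn, ?_⟩
        show ((x : K) + y) = _
        rw [hx, hy, map_add]; ring
      smul_mem' := by
        rintro ⟨cv, r, m, hm, rfl⟩ x ⟨p, hp, n, hn, hx⟩
        refine ⟨r * p, P.mul_mem_left r hp, f r * n + m * f p + m * n, haux r p m n hm hn, ?_⟩
        show ((f r + m) * (x : K)) = _
        rw [hx, map_mul]; ring } with hQ
  have hQiff : ∀ x : T, x ∈ Q ↔ (x : K) ∈ Qset := fun _ => Iff.rfl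
  haveI hQprime : Q.IsPrime := by
    constructor
    · intro h
      have h1 : (1 : T) ∈ Q := h ▸ Submodule.mem_top
      obtain ⟨p, hp, m, hm, hx⟩ := (hQiff 1).mp h1
      have h1P : (1 : R) ∈ P :=
        hkey 1 0 (InMax.zero W) p hp m hm (by rw [map_one]; simpa using hx)
      exact hP.ne_top (P.eq_top_of_isUnit_mem h1P isUnit_one)
    · rintro ⟨x, rx, mx, hmx, rfl⟩ ⟨y, ry, my, hmy, rfl⟩ hprod
      obtain ⟨p, hp, m, hm, hxy⟩ := (hQiff _).mp hprod
      have hxy' : f (rx * ry) + (f rx * my + mx * f ry + mx * my) = f p + m := by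
        rw [map_mul]
        have h0 : ((f rx + mx) * (f ry + my) : K) = f p + m := hxy
        linear_combination h0
      have hrxy : rx * ry ∈ P :=
        hkey (rx * ry) _ (haux rx ry mx my hmx hmy) p hp m hm hxy'
      rcases hP.mem_or_mem hrxy with h | h
      · exact Or.inl ((hQiff _).mpr ⟨rx, h, mx, hmx, rfl⟩)
      · exact Or.inr ((hQiff _).mpr ⟨ry, h, my, hmy, rfl⟩)
  -- localize and dominate
  obtain ⟨W', hsub, hloc⟩ := (LocalSubring.ofPrime T Q).exists_le_valuationSubring
  have hTL : T ≤ (LocalSubring.ofPrime T Q).toSubring := LocalSubring.le_ofPrime T Q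
  have hTW' : T ≤ W'.toSubring := hTL.trans hsub
  have hvalmap : ∀ (x : T),
      ((algebraMap T (LocalSubring.ofPrime T Q).toSubring x : K)) = (x : K) := fun _ => rfl
  -- elements of Q are non-units in W'
  have claimA : ∀ (x : K) (hx : x ∈ T), (⟨x, hx⟩ : T) ∈ Q → InMax W' x := by
    intro x hx hxQ
    have h1 : ¬ IsUnit (algebraMap T (LocalSubring.ofPrime T Q).toSubring ⟨x, hx⟩) := by
      rw [IsLocalization.AtPrime.isUnit_to_map_iff _ Q]
      simpa [Ideal.primeCompl] using hxQ
    refine ⟨hTW' hx, fun hc => ?_⟩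
    obtain ⟨hx0, hxinv⟩ := hc
    apply h1
    apply hloc.1
    rw [subring_isUnit_iff]
    exact ⟨x⁻¹, hxinv, mul_inv_cancel₀ hx0⟩
  -- non-elements of Q are units in W'
  have claimB : ∀ (x : K) (hx : x ∈ T), (⟨x, hx⟩ : T) ∉ Q → (x ≠ 0 ∧ x⁻¹ ∈ W') := by
    intro x hx hxQ
    have h1 : IsUnit (algebraMap T (LocalSubring.ofPrime T Q).toSubring ⟨x, hx⟩) := by
      rw [IsLocalization.AtPrime.isUnit_to_map_iff _ Q]
      simpa [Ideal.primeCompl] using hxQ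
    obtain ⟨y, hy, hxy⟩ := (subring_isUnit_iff _).mp h1
    rw [hvalmap] at hxy
    have hx0 : x ≠ 0 := fun h => by simp [h] at hxy
    refine ⟨hx0, ?_⟩
    rw [inv_eq_of_mul_eq_one_right hxy]
    exact hsub hy
  have hQmem : ∀ r : R, r ∈ P → (⟨f r, hmemT r⟩ : T) ∈ Q :=
    fun r hr => (hQiff _).mpr ⟨r, hr, 0, InMax.zero W, by simp⟩
  have hQnotmem : ∀ r : R, r ∉ P → (⟨f r, hmemT r⟩ : T) ∉ Q := by
    intro r hr hrQ
    obtain ⟨p, hp, m, hm, hx⟩ := (hQiff _).mp hrQ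
    exact hr (hkey r 0 (InMax.zero W) p hp m hm (by simpa using hx))
  refine ⟨W', ?_, fun r => hTW' (hmemT r), fun r => ?_⟩
  · -- W' ≤ W
    intro x hx
    by_contra hxW
    have hx0 : x ≠ 0 := fun h => hxW (h ▸ zero_mem W.toSubring)
    have hinvm : InMax W x⁻¹ := inMax_inv_of_not_mem hxW
    have hinvT : x⁻¹ ∈ T := ⟨0, x⁻¹, hinvm, by simp⟩
    have hinvQ : (⟨x⁻¹, hinvT⟩ : T) ∈ Q := (hQiff _).mpr ⟨0, P.zero_mem, x⁻¹, hinvm, by simp⟩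
    exact (claimA x⁻¹ hinvT hinvQ).2 ⟨inv_ne_zero hx0, by rw [inv_inv]; exact hx⟩
  · constructor
    · intro hIM
      by_contra hr
      obtain ⟨h0, hinv⟩ := claimB (f r) (hmemT r) (hQnotmem r hr)
      exact hIM.2 ⟨h0, hinv⟩
    · intro hr
      exact claimA (f r) (hmemT r) (hQmem r hr)

end stepsec

section finitesec

variable {R : Type*} [CommRing R] {K : Type*} [Field K] [Algebra R K]

theorem finite_chain_case (hinj : Function.Injective (algebraMap R K))
    (C : Set (Ideal R)) (hCprime : ∀ P ∈ C, P.IsPrime) (hC : IsChain (· ≤ ·) C)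
    (D : Finset (Ideal R)) (hD : ↑D ⊆ C) :
    ∃ W : ValuationSubring K, (∀ r : R, algebraMap R K r ∈ W) ∧
      (∀ P' ∈ C, (∀ Q ∈ D, Q ≤ P') → ∀ r : R, InMax W (algebraMap R K r) → r ∈ P') ∧
      (∀ P ∈ D, ∃ W' : ValuationSubring K, W.toSubring ≤ W'.toSubring ∧
        (∀ r : R, InMax W' (algebraMap R K r) ↔ r ∈ P)) := by
  classical
  induction D using Finset.strongInduction with
  | _ D ih =>
    rcases D.eq_empty_or_nonempty with rfl | hne
    · refine ⟨⊤, fun r => ValuationSubring.mem_top _, ?_, by simp⟩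
      intro P' hP' _ r hIM
      have h0 : algebraMap R K r = 0 := by
        by_contra h
        exact hIM.2 ⟨h, ValuationSubring.mem_top _⟩
      have : r = 0 := hinj (by simpa using h0)
      rw [this]
      exact P'.zero_mem
    · -- pick a maximal element of D
      obtain ⟨Pm, hPmD, hmax⟩ := Set.Finite.exists_maximalFor id (↑D : Set (Ideal R)) D.finite_toSet
        (by exact_mod_cast hne)
      simp only [id] at hmax
      have hPmC : Pm ∈ C := hD hPmD
      have hDle : ∀ Q ∈ D, Q ≤ Pm := by
        intro Q hQ
        rcases eq_or_ne Q Pm with rfl | hQne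
        · exact le_rfl
        · rcases hC (hD hQ) hPmC hQne with h | h
          · exact h
          · exact hmax hQ h
      have hErase : D.erase Pm ⊂ D := Finset.erase_ssubset hPmD
      obtain ⟨W₀, hW₀mem, hW₀max, hW₀primes⟩ := ih (D.erase Pm) hErase
        ((Finset.coe_subset.mpr hErase.subset).trans hD)
      have hleP : ∀ r : R, InMax W₀ (algebraMap R K r) → r ∈ Pm := by
        apply hW₀max Pm hPmC
        intro Q hQ
        exact hDle Q (Finset.mem_of_mem_erase hQ)
      obtain ⟨W₁, hW₁sub, hW₁mem, hW₁iff⟩ :=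
        exists_valuationSubring_step W₀ hW₀mem Pm (hCprime Pm hPmC) hleP
      refine ⟨W₁, hW₁mem, ?_, ?_⟩
      · intro P' hP' hDP' r hIM
        exact hDP' Pm hPmD ((hW₁iff r).mp hIM)
      · intro P hPD
        rcases eq_or_ne P Pm with rfl | hPne
        · exact ⟨W₁, le_rfl, hW₁iff⟩
        · obtain ⟨W', hW'sub, hW'iff⟩ := hW₀primes P (Finset.mem_erase.mpr ⟨hPne, hPD⟩)
          exact ⟨W', hW₁sub.trans hW'sub, hW'iff⟩

end finitesec

section boolsec

variable {K : Type*} [Field K]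

/-- `w` is the characteristic function of (the carrier of) a valuation subring. -/
def VRcond (w : K → Bool) : Prop :=
  w 1 = true ∧ (∀ x y : K, w x = true → w y = true → w (x * y) = true) ∧
    (∀ x y : K, w x = true → w y = true → w (x + y) = true) ∧
    (∀ x : K, w x = true → w (-x) = true) ∧
    (∀ x : K, w x = true ∨ w x⁻¹ = true)

/-- The valuation subring associated to a function satisfying `VRcond`. -/
def toVSR (w : K → Bool) (h : VRcond w) : ValuationSubring K where
  carrier := {x | w x = true}
  one_mem' := h.1
  mul_mem' := fun ha hb => h.2.1 _ _ ha hb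
  add_mem' := fun ha hb => h.2.2.1 _ _ ha hb
  zero_mem' := by
    have h1 := h.2.2.2.1 1 h.1
    have h2 := h.2.2.1 1 (-1) h.1 h1
    rw [add_neg_cancel] at h2
    exact h2
  neg_mem' := fun ha => h.2.2.2.1 _ ha
  mem_or_inv_mem' := h.2.2.2.2

lemma mem_toVSR {w : K → Bool} {h : VRcond w} {x : K} : x ∈ toVSR w h ↔ w x = true := Iff.rfl

/-- Characteristic function of a valuation subring. -/
noncomputable def chi (W : ValuationSubring K) : K → Bool :=
  fun x => @decide (x ∈ W) (Classical.propDecidable _)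

lemma chi_eq_true {W : ValuationSubring K} {x : K} : chi W x = true ↔ x ∈ W := by
  simp [chi]

lemma VRcond_chi (W : ValuationSubring K) : VRcond (chi W) := by
  refine ⟨chi_eq_true.mpr (one_mem W.toSubring), fun x y hx hy => ?_, fun x y hx hy => ?_,
    fun x hx => ?_, fun x => ?_⟩
  · exact chi_eq_true.mpr (mul_mem (chi_eq_true.mp hx) (chi_eq_true.mp hy))
  · exact chi_eq_true.mpr (add_mem (chi_eq_true.mp hx) (chi_eq_true.mp hy))
  · exact chi_eq_true.mpr (neg_mem (chi_eq_true.mp hx))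
  · exact (W.mem_or_inv_mem x).imp chi_eq_true.mpr chi_eq_true.mpr

lemma isClosed_bool3 {X : Type*} [TopologicalSpace X] {g1 g2 g3 : X → Bool}
    (h1 : Continuous g1) (h2 : Continuous g2) (h3 : Continuous g3)
    (p : Bool → Bool → Bool → Prop) :
    IsClosed {z | p (g1 z) (g2 z) (g3 z)} := by
  have h : {z | p (g1 z) (g2 z) (g3 z)} =
      (fun z => (g1 z, g2 z, g3 z)) ⁻¹' {b : Bool × Bool × Bool | p b.1 b.2.1 b.2.2} := rfl
  rw [h]
  exact (isClosed_discrete _).preimage (h1.prodMk (h2.prodMk h3))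

lemma isClosed_VRcond {X : Type*} [TopologicalSpace X]
    (g : X → K → Bool) (hg : ∀ x, Continuous (fun z => g z x)) :
    IsClosed {z | VRcond (g z)} := by
  have h : {z | VRcond (g z)} =
      ({z | g z 1 = true} ∩
      (⋂ (x : K) (y : K), {z | g z x = true → g z y = true → g z (x * y) = true}) ∩
      (⋂ (x : K) (y : K), {z | g z x = true → g z y = true → g z (x + y) = true}) ∩
      (⋂ (x : K), {z | g z x = true → g z (-x) = true}) ∩
      (⋂ (x : K), {z | g z x = true ∨ g z x⁻¹ = true})) := by
    ext z
    simp only [Set.mem_inter_iff, Set.mem_iInter, Set.mem_setOf_eq, VRcond]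
    tauto
  rw [h]
  refine IsClosed.inter (IsClosed.inter (IsClosed.inter (IsClosed.inter ?_ ?_) ?_) ?_) ?_
  · exact isClosed_bool3 (hg 1) (hg 1) (hg 1) (fun a _ _ => a = true)
  · exact isClosed_iInter fun x => isClosed_iInter fun y =>
      isClosed_bool3 (hg x) (hg y) (hg (x * y)) (fun a b c => a = true → b = true → c = true)
  · exact isClosed_iInter fun x => isClosed_iInter fun y =>
      isClosed_bool3 (hg x) (hg y) (hg (x + y)) (fun a b c => a = true → b = true → c = true)
  · exact isClosed_iInter fun x =>
      isClosed_bool3 (hg x) (hg (-x)) (hg x) (fun a b _ => a = true → b = true)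
  · exact isClosed_iInter fun x =>
      isClosed_bool3 (hg x) (hg x⁻¹) (hg x) (fun a b _ => a = true ∨ b = true)

end boolsec

theorem stmt_15 {R K : Type*} [CommRing R] [IsDomain R] [Field K] [Algebra R K]
    [IsFractionRing R K] (C : Set (Ideal R))
    (hCprime : ∀ P ∈ C, P.IsPrime) (hC : IsChain (· ≤ ·) C) :
    ∃ (O : ValuationSubring K) (h : ∀ r : R, algebraMap R K r ∈ O.toSubring)
      (CO : Set (Ideal O)),
      (∀ P ∈ CO, P.IsPrime) ∧ IsChain (· ≤ ·) CO ∧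
      (Ideal.comap ((algebraMap R K).codRestrict O.toSubring h)) '' CO = C := by
  classical
  rcases C.eq_empty_or_nonempty with rfl | hCne
  · exact ⟨⊤, fun r => ValuationSubring.mem_top _, ∅, by simp, by simp [IsChain], by simp⟩
  obtain ⟨P₀, hP₀⟩ := hCne
  set f := algebraMap R K with hf
  have hinj : Function.Injective f := IsFractionRing.injective R K
  set X := (K → Bool) × (↥C → K → Bool) with hX
  set F : ↥C → Set X := fun i =>
    {z | VRcond z.1 ∧ (∀ r : R, z.1 (f r) = true) ∧ VRcond (z.2 i) ∧
      (∀ x : K, z.1 x = true → z.2 i x = true) ∧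
      (∀ r : R, r ∈ i.1 → f r ≠ 0 → z.2 i (f r)⁻¹ = false) ∧
      (∀ r : R, r ∉ i.1 → z.2 i (f r)⁻¹ = true)} with hF
  have cont1 : ∀ x : K, Continuous (fun z : X => z.1 x) :=
    fun x => (continuous_apply x).comp continuous_fst
  have cont2 : ∀ (i : ↥C) (x : K), Continuous (fun z : X => z.2 i x) :=
    fun i x => (continuous_apply x).comp ((continuous_apply i).comp continuous_snd)
  have hFclosed : ∀ i, IsClosed (F i) := by
    intro i
    have hdecomp : F i =
        ({z : X | VRcond z.1} ∩
        (⋂ (r : R), {z : X | z.1 (f r) = true}) ∩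
        {z : X | VRcond (z.2 i)} ∩
        (⋂ (x : K), {z : X | z.1 x = true → z.2 i x = true}) ∩
        (⋂ (r : R), {z : X | r ∈ i.1 → f r ≠ 0 → z.2 i (f r)⁻¹ = false}) ∩
        (⋂ (r : R), {z : X | r ∉ i.1 → z.2 i (f r)⁻¹ = true})) := by
      ext z
      simp only [hF, Set.mem_inter_iff, Set.mem_iInter, Set.mem_setOf_eq]
      tauto
    rw [hdecomp]
    refine IsClosed.inter (IsClosed.inter (IsClosed.inter (IsClosed.inter
      (IsClosed.inter ?_ ?_) ?_) ?_) ?_) ?_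
    · exact isClosed_VRcond (X := X) (fun z => z.1) cont1
    · exact isClosed_iInter fun r =>
        isClosed_bool3 (cont1 (f r)) (cont1 (f r)) (cont1 (f r)) (fun a _ _ => a = true)
    · exact isClosed_VRcond (X := X) (fun z => z.2 i) (cont2 i)
    · exact isClosed_iInter fun x =>
        isClosed_bool3 (cont1 x) (cont2 i x) (cont1 x) (fun a b _ => a = true → b = true)
    · exact isClosed_iInter fun r =>
        isClosed_bool3 (cont2 i (f r)⁻¹) (cont2 i (f r)⁻¹) (cont2 i (f r)⁻¹)
          (fun a _ _ => r ∈ i.1 → f r ≠ 0 → a = false)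
    · exact isClosed_iInter fun r =>
        isClosed_bool3 (cont2 i (f r)⁻¹) (cont2 i (f r)⁻¹) (cont2 i (f r)⁻¹)
          (fun a _ _ => r ∉ i.1 → a = true)
  -- nonempty intersection by compactness and the finite case
  have hne : (⋂ i, F i).Nonempty := by
    by_contra hcon
    rw [Set.not_nonempty_iff_eq_empty] at hcon
    obtain ⟨u, hu⟩ := isCompact_univ.elim_finite_subfamily_closed F hFclosed
      (by rw [hcon]; simp)
    set D : Finset (Ideal R) := Finset.image (Subtype.val : ↥C → Ideal R) u with hD
    have hDC : ↑D ⊆ C := by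
      intro P hP
      have hP' : P ∈ D := hP
      rw [hD, Finset.mem_image] at hP'
      obtain ⟨i, _, heq⟩ := hP'
      exact heq ▸ i.2
    obtain ⟨W, hW1, _, hW3⟩ := finite_chain_case hinj C hCprime hC D hDC
    choose W' hW'sub hW'iff using hW3
    set z : X := (chi W, fun i x =>
      if h : (i : Ideal R) ∈ D then chi (W' _ h) x else chi W x) with hz
    have hzmem : z ∈ ⋂ i ∈ u, F i := by
      rw [Set.mem_iInter₂]
      intro i hi
      have hiD : (i : Ideal R) ∈ D := by
        rw [hD, Finset.mem_image]; exact ⟨i, hi, rfl⟩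
      have hz2 : z.2 i = chi (W' _ hiD) := by
        funext x
        simp only [hz, dif_pos hiD]
      refine ⟨VRcond_chi W, fun r => chi_eq_true.mpr (hW1 r), ?_, ?_, ?_, ?_⟩
      · rw [hz2]; exact VRcond_chi _
      · intro x hx
        rw [hz2]
        exact chi_eq_true.mpr (hW'sub _ hiD (chi_eq_true.mp hx))
      · intro r hr hr0
        rw [hz2]
        have hIM : InMax (W' _ hiD) (f r) := (hW'iff _ hiD r).mpr hr
        rw [← Bool.not_eq_true, chi_eq_true]
        intro hmem
        exact hIM.2 ⟨hr0, hmem⟩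
      · intro r hr
        rw [hz2, chi_eq_true]
        have hnIM : ¬ InMax (W' _ hiD) (f r) := fun h => hr ((hW'iff _ hiD r).mp h)
        have hmem : f r ∈ W' _ hiD := hW'sub _ hiD (hW1 r)
        by_contra hninv
        exact hnIM ⟨hmem, fun hc => hninv hc.2⟩
    have : z ∈ (Set.univ : Set X) ∩ ⋂ i ∈ u, F i := ⟨trivial, hzmem⟩
    rw [hu] at this
    exact this
  obtain ⟨z, hz⟩ := hne
  have hzF : ∀ i, z ∈ F i := Set.mem_iInter.mp hz
  have i₀ : ↥C := ⟨P₀, hP₀⟩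
  -- reconstruct the valuation subrings
  set O : ValuationSubring K := toVSR z.1 (hzF i₀).1 with hO
  have hmem : ∀ r : R, f r ∈ O.toSubring := fun r => (hzF i₀).2.1 r
  set Wp : ↥C → ValuationSubring K := fun i => toVSR (z.2 i) (hzF i).2.2.1 with hWp
  have hle : ∀ (i : ↥C) (x : K), x ∈ O → x ∈ Wp i := fun i x hx => (hzF i).2.2.2.1 x hx
  have hiff : ∀ (i : ↥C) (r : R), InMax (Wp i) (f r) ↔ r ∈ i.1 := by
    intro i r
    constructor
    · intro hIM
      by_contra hr
      have hinv : (f r)⁻¹ ∈ Wp i := (hzF i).2.2.2.2.2 r hr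
      have hr0 : f r ≠ 0 := by
        intro h0
        exact hr (by rw [show r = 0 from hinj (by simpa using h0)]; exact i.1.zero_mem)
      exact hIM.2 ⟨hr0, hinv⟩
    · intro hr
      refine ⟨hle i _ (hmem r), fun hc => ?_⟩
      have hfalse := (hzF i).2.2.2.2.1 r hr hc.1
      have htrue : z.2 i (f r)⁻¹ = true := hc.2
      rw [htrue] at hfalse
      exact Bool.true_eq_false.mp hfalse
  -- the chain of primes of O
  have hleO : ∀ (i : ↥C) (x : ↥O), (x : K) ∈ Wp i := fun i x => hle i _ x.2
  set q : ↥C → Ideal O := fun i =>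
    { carrier := {x : ↥O | InMax (Wp i) (x : K)}
      zero_mem' := by
        show InMax (Wp i) ((0 : ↥O) : K)
        rw [ZeroMemClass.coe_zero]
        exact InMax.zero _
      add_mem' := by
        intro a b ha hb
        show InMax (Wp i) ((a + b : ↥O) : K)
        rw [AddMemClass.coe_add]
        exact InMax.add ha hb
      smul_mem' := by
        intro c x hx
        show InMax (Wp i) ((c * x : ↥O) : K)
        rw [MulMemClass.coe_mul]
        exact InMax.mul_left (hleO i c) hx } with hq
  have hqmem : ∀ (i : ↥C) (x : ↥O), x ∈ q i ↔ InMax (Wp i) (x : K) := fun _ _ => Iff.rfl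
  have hqprime : ∀ i, (q i).IsPrime := by
    intro i
    constructor
    · intro htop
      have h1 : (1 : ↥O) ∈ q i := htop ▸ Submodule.mem_top
      have : InMax (Wp i) ((1 : ↥O) : K) := h1
      rw [OneMemClass.coe_one] at this
      exact not_inMax_one _ this
    · intro a b hab
      have : InMax (Wp i) ((a : K) * (b : K)) := by
        have h := (hqmem i _).mp hab
        rwa [MulMemClass.coe_mul] at h
      exact (InMax.or (hleO i a) (hleO i b) this).imp (hqmem i a).mpr (hqmem i b).mpr
  have hcomap : ∀ i : ↥C,
      Ideal.comap ((algebraMap R K).codRestrict O.toSubring hmem) (q i) = i.1 := by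
    intro i
    ext r
    rw [Ideal.mem_comap]
    exact (hqmem i _).trans (hiff i r)
  refine ⟨O, hmem, Set.range q, ?_, ?_, ?_⟩
  · rintro P ⟨i, rfl⟩
    exact hqprime i
  · rintro _ ⟨i, rfl⟩ _ ⟨j, rfl⟩ _
    exact total_of (· ≤ ·) (q i) (q j)
  · ext P
    constructor
    · rintro ⟨_, ⟨i, rfl⟩, rfl⟩
      rw [hcomap i]
      exact i.2
    · intro hP
      exact ⟨q ⟨P, hP⟩, ⟨⟨P, hP⟩, rfl⟩, hcomap ⟨P, hP⟩⟩
end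

section
/- Let R be a local domain with maximal ideal m and fraction field L, let v be a valuation on an algebraic closure of L whose valuation ring dominates R, and let η be a root of a monic polynomial h(X) ∈ R[X] with v(h'(η)) = 0 and v(η) ≥ 0. Then the ring R'/mR', where R' = R[η]_{m_v ∩ R[η]}, is reduced; in particular the localization ((R/m)[X]/(h̄(X)))_q at the prime q corresponding to m_v ∩ R[η] is reduced, where h̄ denotes the reduction of h modulo m. -/
open Polynomial IsLocalRing

theorem stmt_18 {R L Ω Γ : Type*} [CommRing R] [IsDomain R] [IsLocalRing R]
    [Field L] [Algebra R L] [IsFractionRing R L]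
    [Field Ω] [Algebra L Ω] [IsAlgClosure L Ω]
    [Algebra R Ω] [IsScalarTower R L Ω]
    [LinearOrderedCommGroupWithZero Γ] (v : Valuation Ω Γ)
    (hdom₁ : ∀ r : R, v (algebraMap R Ω r) ≤ 1)
    (hdom₂ : ∀ r : R, v (algebraMap R Ω r) < 1 ↔ r ∈ IsLocalRing.maximalIdeal R)
    (h : Polynomial R) (hmonic : h.Monic) (η : Ω)
    (hroot : Polynomial.aeval η h = 0)
    (hη : v η ≤ 1)
    (hder : v (Polynomial.aeval η (Polynomial.derivative h)) = 1)
    (P : Ideal (Algebra.adjoin R {η})) [P.IsPrime]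
    (hP : ∀ x : Algebra.adjoin R {η}, x ∈ P ↔ v (x : Ω) < 1) :
    IsReduced (Localization.AtPrime P ⧸
      Ideal.map ((algebraMap (Algebra.adjoin R {η}) (Localization.AtPrime P)).comp
        (algebraMap R (Algebra.adjoin R {η}))) (IsLocalRing.maximalIdeal R)) := by
  classical
  let m := IsLocalRing.maximalIdeal R
  let A : Subalgebra R Ω := Algebra.adjoin R {η}
  let AP := Localization.AtPrime P
  have hA : A = Algebra.adjoin R {η} := rfl
  -- the surjection R[X] → A
  have hmem : ∀ f : R[X], aeval η f ∈ A := fun f => by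
    show aeval η f ∈ Algebra.adjoin R {η}
    rw [Algebra.adjoin_singleton_eq_range_aeval]
    exact Set.mem_range_self f
  let π : R[X] →ₐ[R] A := (Polynomial.aeval η).codRestrict A hmem
  have hπ : ∀ f : R[X], ((π f : A) : Ω) = aeval η f := fun f => rfl
  have hπsurj : Function.Surjective π := by
    rintro ⟨x, hx⟩
    rw [hA, Algebra.adjoin_singleton_eq_range_aeval] at hx
    obtain ⟨f, hf⟩ := hx
    exact ⟨f, Subtype.ext hf⟩
  -- residue field and reduction map
  let k := IsLocalRing.ResidueField R
  set φ : R[X] →+* k[X] := Polynomial.mapRingHom (IsLocalRing.residue R) with hφ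
  have hφsurj : Function.Surjective φ :=
    Polynomial.map_surjective _ Ideal.Quotient.mk_surjective
  have hkerφ : RingHom.ker φ = Ideal.map (C : R →+* R[X]) m := by
    rw [hφ, Polynomial.ker_mapRingHom]
    congr 1
    exact Ideal.mk_ker
  -- key: π of ker φ lands in m·A, and value has v < 1
  have hcoeff_mem : ∀ f : R[X], f ∈ RingHom.ker φ →
      π f ∈ Ideal.map (algebraMap R A) m := by
    intro f hf
    rw [hkerφ] at hf
    have : π f ∈ Ideal.map π.toRingHom (Ideal.map (C : R →+* R[X]) m) :=
      Ideal.mem_map_of_mem _ hf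
    rw [Ideal.map_map] at this
    convert this using 2
    refine RingHom.ext fun r => Subtype.ext ?_
    show algebraMap R Ω r = aeval η (C r)
    rw [aeval_C]
  have hval_ker : ∀ f : R[X], f ∈ RingHom.ker φ → v (aeval η f) < 1 := by
    intro f hf
    have hco : ∀ i, f.coeff i ∈ m := by
      intro i
      have : φ f = 0 := hf
      have := congrArg (fun p => Polynomial.coeff p i) this
      simp only [hφ, Polynomial.coe_mapRingHom, Polynomial.coeff_map,
        Polynomial.coeff_zero] at this
      exact (Ideal.Quotient.eq_zero_iff_mem).mp this
    rw [Polynomial.aeval_eq_sum_range]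
    apply Valuation.map_sum_lt v one_ne_zero
    intro i _
    have h1 : v ((f.coeff i) • η ^ i) = v (algebraMap R Ω (f.coeff i)) * v η ^ i := by
      rw [Algebra.smul_def, v.map_mul, v.map_pow]
    rw [h1]
    calc v (algebraMap R Ω (f.coeff i)) * v η ^ i
        ≤ v (algebraMap R Ω (f.coeff i)) * 1 := mul_le_mul_right (pow_le_one' hη i) _
      _ = v (algebraMap R Ω (f.coeff i)) := mul_one _
      _ < 1 := (hdom₂ _).mpr (hco i)
  -- primes
  set q₁ : Ideal R[X] := P.comap π.toRingHom with hq₁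
  haveI : q₁.IsPrime := Ideal.comap_isPrime _ _
  have hkerq : RingHom.ker φ ≤ q₁ := by
    intro f hf
    show π f ∈ P
    rw [hP]
    exact hval_ker f hf
  have hhq : h ∈ q₁ := by
    show π h ∈ P
    have : π h = 0 := Subtype.ext (by rw [hπ, hroot]; rfl)
    rw [this]; exact P.zero_mem
  have hdq : derivative h ∉ q₁ := by
    intro hc
    have := (hP (π (derivative h))).mp hc
    rw [hπ, hder] at this
    exact lt_irrefl _ this
  set q₀ : Ideal k[X] := q₁.map φ with hq₀
  haveI hq₀prime : q₀.IsPrime := Ideal.map_isPrime_of_surjective hφsurj hkerq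
  have hcomapq : q₀.comap φ = q₁ := by
    rw [hq₀, Ideal.comap_map_of_surjective _ hφsurj]
    exact sup_eq_left.mpr hkerq
  -- the reduced polynomial and its derivative
  have hbmem : φ h ∈ q₀ := Ideal.mem_map_of_mem _ hhq
  have hbder : φ (derivative h) ∉ q₀ := fun hc => hdq (by rw [← hcomapq]; exact hc)
  have hbderiv : φ (derivative h) = derivative (φ h) := by
    rw [hφ]; exact (Polynomial.derivative_map h _).symm
  -- q₀ is principal with prime generator p
  haveI : q₀.IsPrincipal := IsPrincipalIdealRing.principal q₀
  have hq₀ne : q₀ ≠ ⊥ := by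
    intro hc
    rw [hc, Ideal.mem_bot] at hbmem
    exact (hmonic.map (IsLocalRing.residue R)).ne_zero hbmem
  set p : k[X] := Submodule.IsPrincipal.generator q₀ with hp
  have hpprime : Prime p := Submodule.IsPrincipal.prime_generator_of_isPrime q₀ hq₀ne
  have hmemq₀ : ∀ x : k[X], x ∈ q₀ ↔ p ∣ x := by
    intro x
    rw [← Ideal.span_singleton_generator q₀, Ideal.mem_span_singleton]
  -- h̄ = p * w with p ∤ w
  obtain ⟨w, hw⟩ := (hmemq₀ _).mp hbmem
  have hpw : ¬ p ∣ w := by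
    rintro ⟨w', rfl⟩
    apply hbder
    rw [hmemq₀, hbderiv, hw]
    rw [derivative_mul, derivative_mul]
    exact dvd_add ((dvd_mul_right p w').mul_left _) (dvd_mul_right p _)
  -- main inclusion : P ⊆ m·A_P
  have main : ∀ x : A, x ∈ P →
      algebraMap A AP x ∈ Ideal.map (algebraMap A AP) (Ideal.map (algebraMap R A) m) := by
    intro x hx
    obtain ⟨f, rfl⟩ := hπsurj x
    have hfq : φ f ∈ q₀ := Ideal.mem_map_of_mem _ hx
    obtain ⟨g, hg⟩ := (hmemq₀ _).mp hfq
    obtain ⟨W, hW⟩ := hφsurj w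
    obtain ⟨G, hG⟩ := hφsurj g
    -- d := W*f - h*G ∈ ker φ
    have hd : W * f - h * G ∈ RingHom.ker φ := by
      rw [RingHom.mem_ker, map_sub, map_mul, map_mul, hW, hG, hg, hw]
      ring
    -- π W ∉ P
    have hWP : π W ∉ P := by
      intro hc
      apply hpw
      rw [← hW]
      exact (hmemq₀ _).mp (Ideal.mem_map_of_mem _ (show W ∈ q₁ from hc))
    -- π W * π f = π d ∈ m·A
    have hπh : π h = 0 := Subtype.ext (by rw [hπ, hroot]; rfl)
    have hprod : π W * π f ∈ Ideal.map (algebraMap R A) m := by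
      have : π W * π f = π (W * f - h * G) := by
        rw [map_sub, map_mul, map_mul, hπh, zero_mul, sub_zero]
      rw [this]
      exact hcoeff_mem _ hd
    -- conclude in the localization
    have hu : IsUnit (algebraMap A AP (π W)) :=
      (IsLocalization.AtPrime.isUnit_to_map_iff AP P (π W)).mpr hWP
    obtain ⟨u, hu'⟩ := hu
    have : algebraMap A AP (π f) = (↑u⁻¹ : AP) * algebraMap A AP (π W * π f) := by
      rw [map_mul, ← hu', ← mul_assoc, Units.inv_mul, one_mul]
    rw [this]
    exact Ideal.mul_mem_left _ _ (Ideal.mem_map_of_mem _ hprod)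
  -- the ideal equality
  have key : Ideal.map ((algebraMap A AP).comp (algebraMap R A)) m
      = IsLocalRing.maximalIdeal AP := by
    apply le_antisymm
    · rw [← Localization.AtPrime.map_eq_maximalIdeal (I := P), ← Ideal.map_map]
      apply Ideal.map_mono
      rw [Ideal.map_le_iff_le_comap]
      intro r hr
      rw [Ideal.mem_comap]
      rw [hP]
      have : ((algebraMap R A r : A) : Ω) = algebraMap R Ω r := by
        rfl
      rw [this]
      exact (hdom₂ r).mpr hr
    · rw [← Localization.AtPrime.map_eq_maximalIdeal (I := P),
        Ideal.map_le_iff_le_comap]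
      intro x hx
      rw [Ideal.mem_comap, ← Ideal.map_map]
      exact main x hx
  rw [key]
  haveI : (IsLocalRing.maximalIdeal AP).IsPrime :=
    (IsLocalRing.maximalIdeal.isMaximal AP).isPrime
  haveI := Ideal.Quotient.noZeroDivisors (IsLocalRing.maximalIdeal AP)
  exact isReduced_of_noZeroDivisors (M₀ := AP ⧸ IsLocalRing.maximalIdeal AP)
end
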